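/- Let Φ : M_n(ℂ) → M_n(ℂ) be a unital completely positive trace-preserving map whose range is contained in S_n = {X : X_{ii} = X_{jj} for all i,j}, and which additionally satisfies Φ(E_{ii}) = (1/n)I_n for all i and Φ(E_{ij}) = c_{ij}E_{ij} for i ≠ j. Then |c_{ij}| ≤ 1/n for all i ≠ j. -/

import Mathlib

open Matrix
open scoped ComplexOrder

/-- The Choi matrix of a map of matrices: `Ch(Φ) = Σ_{i,j} E_ij ⊗ Φ(E_ij)`. -/
def choiMatrix {n : ℕ} (Φ : Matrix (Fin n) (Fin n) ℂ → Matrix (Fin n) (Fin n) ℂ) :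
    Matrix (Fin n × Fin n) (Fin n × Fin n) ℂ :=
  Matrix.of fun p q => (Φ (single p.1 q.1 1)) p.2 q.2

theorem offdiag_coeff_le {n : ℕ} (hn : 0 < n)
    (Φ : Matrix (Fin n) (Fin n) ℂ →ₗ[ℂ] Matrix (Fin n) (Fin n) ℂ)
    (c : Fin n → Fin n → ℂ)
    (hunital : Φ 1 = 1)
    (htrace : ∀ A, (Φ A).trace = A.trace)
    (hcp : (choiMatrix ⇑Φ).PosSemidef)
    (hrange : ∀ A, ∀ i j, (Φ A) i i = (Φ A) j j)
    (hdiag : ∀ i, Φ (single i i 1) = (n : ℂ)⁻¹ • (1 : Matrix (Fin n) (Fin n) ℂ))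
    (hoff : ∀ i j, i ≠ j → Φ (single i j 1) = c i j • single i j (1 : ℂ)) :
    ∀ i j, i ≠ j → ‖c i j‖ ≤ (n : ℝ)⁻¹ := by
  intro i j hij
  by_cases hc : c i j = 0
  · simp [hc]
  set M := choiMatrix ⇑Φ with hM
  set r : ℝ := ‖c i j‖ with hr
  have hr0 : 0 < r := by simpa [hr] using (norm_pos_iff.mpr hc)
  have hpp : M (i,i) (i,i) = (n:ℂ)⁻¹ := by
    simp [hM, choiMatrix, hdiag i, Matrix.one_apply]
  have hqq : M (j,j) (j,j) = (n:ℂ)⁻¹ := by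
    simp [hM, choiMatrix, hdiag j, Matrix.one_apply]
  have hpq : M (i,i) (j,j) = c i j := by
    simp [hM, choiMatrix, hoff i j hij, Matrix.single_apply_same]
  have hqp : M (j,j) (i,i) = starRingEnd ℂ (c i j) := by
    have h := hcp.1.apply (i,i) (j,j)
    rw [← star_star (M (j,j) (i,i)), h, hpq]
    rfl
  set b : ℂ := -(starRingEnd ℂ) (c i j) / (r : ℂ) with hb
  have hmul : (starRingEnd ℂ) (c i j) * c i j = (r : ℂ) * (r : ℂ) := by
    rw [mul_comm, Complex.mul_conj, Complex.normSq_eq_norm_sq, ← hr]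
    push_cast
    ring
  have hkey := hcp.dotProduct_mulVec_nonneg (Pi.single (i,i) 1 + Pi.single (j,j) b)
  have hexp : dotProduct (star (Pi.single (i,i) 1 + Pi.single (j,j) b))
      (M *ᵥ (Pi.single (i,i) 1 + Pi.single (j,j) b))
      = M (i,i) (i,i) + M (i,i) (j,j) * b
        + (starRingEnd ℂ b * M (j,j) (i,i) + starRingEnd ℂ b * (M (j,j) (j,j) * b)) := by
    rw [star_add, mulVec_add, mulVec_single, mulVec_single]
    have h1 : star (Pi.single ((i,i)) (1:ℂ) : Fin n × Fin n → ℂ) = Pi.single (i,i) 1 := by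
      ext p; rcases eq_or_ne p ((i,i) : Fin n × Fin n) with h | h <;>
        simp [h, Pi.single_apply]
    have h2 : star (Pi.single ((j,j)) b : Fin n × Fin n → ℂ)
        = Pi.single (j,j) (starRingEnd ℂ b) := by
      ext p; rcases eq_or_ne p ((j,j) : Fin n × Fin n) with h | h <;>
        simp [h, Pi.single_apply]
    rw [h1, h2, add_dotProduct, dotProduct_add, dotProduct_add,
      single_dotProduct, single_dotProduct, single_dotProduct, single_dotProduct]
    simp only [Pi.smul_apply, op_smul_eq_mul, Matrix.col_apply]
    ring
  rw [hexp, hpp, hpq, hqp, hqq] at hkey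
  have hcb : c i j * b = -(r : ℂ) := by
    rw [hb]
    field_simp
    rw [mul_comm]
    rw [hmul]; ring
  have hcb' : starRingEnd ℂ b * starRingEnd ℂ (c i j) = -(r : ℂ) := by
    have h := congrArg (starRingEnd ℂ) hcb
    rw [_root_.map_mul, map_neg, Complex.conj_ofReal] at h
    rw [mul_comm]
    exact h
  have hbb : starRingEnd ℂ b * b = 1 := by
    rw [hb, map_div₀, map_neg, Complex.conj_conj, Complex.conj_ofReal]
    field_simp
    rw [mul_comm]
    rw [hmul]; ring
  rw [hcb, hcb',
    show starRingEnd ℂ b * ((n:ℂ)⁻¹ * b) = starRingEnd ℂ b * b * (n:ℂ)⁻¹ from by ring,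
    hbb, one_mul] at hkey
  have hkey2 : (0:ℂ) ≤ (((n:ℝ)⁻¹ + (n:ℝ)⁻¹ - 2*r : ℝ) : ℂ) := by
    convert hkey using 1
    push_cast
    ring
  rw [Complex.zero_le_real] at hkey2
  linarith
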